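/- Let G be a C^∞ Lie group modelled on I : ModelWithCorners ℝ E H and let S : G → Submodule ℝ E be a multiplicative distribution on G. Then S is right invariant: for every g : G, S g = Submodule.map (mfderiv I I (fun x => x * g) 1) (S 1), i.e. S(g) is the image of S(1) under the tangent map at the identity of the right translation by g. -/

import Mathlib

open Manifold

/-- A multiplicative distribution on a Lie group is right invariant: `S g` is the image
of `S 1` under the tangent map at the identity of the right translation by `g`. -/
theorem stmt_6 {E : Type*} [NormedAddCommGroup E] [NormedSpace ℝ E]
    {H : Type*} [TopologicalSpace H] (I : ModelWithCorners ℝ E H)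
    {G : Type*} [TopologicalSpace G] [ChartedSpace H G] [Group G] [LieGroup I (⊤ : ℕ∞) G]
    (S : G → Submodule ℝ E)
    (hS : ∀ (g h : G) (v w : E), v ∈ S g → w ∈ S h →
      mfderiv (I.prod I) I (fun p : G × G => p.1 * p.2) (g, h)
        ((v, w) : TangentSpace (I.prod I) (g, h)) ∈ S (g * h)) :
    ∀ g : G, S g = Submodule.map (mfderiv I I (fun x : G => x * g) 1).toLinearMap (S 1) := by
  have key : ∀ (a b : G) (v : E), v ∈ S a →
      mfderiv I I (fun x : G => x * b) a v ∈ S (a * b) := by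
    intro a b v hv
    have h0 := hS a b v 0 hv (S b).zero_mem
    erw [mfderiv_prod_eq_add_apply
      (((contMDiff_mul I ((⊤ : ℕ∞) : WithTop ℕ∞) (G := G)).mdifferentiable (by simp)) (a, b))] at h0
    erw [map_zero, add_zero] at h0
    exact h0
  intro g
  apply le_antisymm
  · intro v hv
    have h1 : mfderiv I I (fun x : G => x * g⁻¹) g v ∈ S 1 := by
      simpa using key g g⁻¹ v hv
    refine ⟨_, h1, ?_⟩
    have hcomp : mfderiv I I ((fun x : G => x * g) ∘ (fun x : G => x * g⁻¹)) g =
        (mfderiv I I (fun x : G => x * g) (g * g⁻¹)).comp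
          (mfderiv I I (fun x : G => x * g⁻¹) g) :=
      mfderiv_comp_of_eq
        (mdifferentiableAt_mul_right (I := I) (a := g) (b := (1 : G)))
        (mdifferentiableAt_mul_right (I := I)) (mul_inv_cancel g)
    have hid : ((fun x : G => x * g) ∘ (fun x : G => x * g⁻¹)) = id := by
      funext x; simp
    rw [hid, mfderiv_id, mul_inv_cancel] at hcomp
    have := congrArg (fun (L : E →L[ℝ] E) => L v) hcomp.symm
    exact this
  · rintro v ⟨w, hw, rfl⟩
    have := key 1 g w hw
    simp only [one_mul] at this
    exact this
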